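/- For all integers r ≥ 1 and s ≥ 1, the binomial coefficient C(r − 1, 2^s − 2) is odd if and only if r ≡ 0 (mod 2^s) or r ≡ −1 (mod 2^s). -/

import Mathlib

private lemma lucas_two (n k : ℕ) :
    Odd (Nat.choose n k) ↔
      Odd (Nat.choose (n % 2) (k % 2)) ∧ Odd (Nat.choose (n / 2) (k / 2)) := by
  have : Fact (Nat.Prime 2) := ⟨Nat.prime_two⟩
  have h := @Choose.choose_modEq_choose_mod_mul_choose_div_nat n k 2 this
  rw [Nat.ModEq] at h
  rw [Nat.odd_iff, h, ← Nat.odd_iff, Nat.odd_mul]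

private lemma odd_choose_testBit : ∀ n k : ℕ,
    Odd (Nat.choose n k) ↔ ∀ i, k.testBit i = true → n.testBit i = true := by
  intro n
  induction n using Nat.strong_induction_on with
  | _ n ih =>
    intro k
    rcases Nat.eq_zero_or_pos n with hn | hn
    · subst hn
      rcases Nat.eq_zero_or_pos k with hk | hk
      · subst hk; simp
      · refine iff_of_false ?_ ?_
        · simp [Nat.choose_eq_zero_of_lt hk, Nat.odd_iff]
        · intro h
          refine hk.ne' (Nat.eq_of_testBit_eq fun i => ?_)
          rw [Nat.zero_testBit]
          by_contra hb
          simp only [Bool.not_eq_false] at hb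
          simpa using h i hb
    · rw [lucas_two]
      have h2 : n / 2 < n := Nat.div_lt_self hn (by norm_num)
      rw [ih _ h2 (k / 2)]
      have hmod : Odd (Nat.choose (n % 2) (k % 2)) ↔ (k % 2 = 1 → n % 2 = 1) := by
        rcases Nat.mod_two_eq_zero_or_one n with h1 | h1 <;>
          rcases Nat.mod_two_eq_zero_or_one k with h2 | h2 <;>
            simp [h1, h2]
      rw [hmod]
      constructor
      · rintro ⟨h0, hrest⟩ i hki
        cases i with
        | zero =>
          rw [Nat.testBit_zero] at hki ⊢
          simp only [decide_eq_true_eq] at hki ⊢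
          exact h0 hki
        | succ i =>
          rw [← Nat.testBit_div_two] at hki ⊢
          exact hrest i hki
      · intro h
        refine ⟨fun hk => ?_, fun i hi => ?_⟩
        · have := h 0 (by rw [Nat.testBit_zero]; simp [hk])
          rw [Nat.testBit_zero] at this
          simpa using this
        · rw [Nat.testBit_div_two] at hi ⊢
          exact h (i + 1) hi

private lemma odd_choose_land (n k : ℕ) :
    Odd (Nat.choose n k) ↔ k &&& n = k := by
  rw [odd_choose_testBit]
  constructor
  · intro h
    refine Nat.eq_of_testBit_eq fun i => ?_
    rw [Nat.testBit_land]
    cases hk : k.testBit i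
    · simp
    · simp [h i hk]
  · intro h i hi
    have := congrArg (fun m => m.testBit i) h
    simp only [Nat.testBit_land, hi, Bool.true_and] at this
    exact this

set_option maxHeartbeats 800000 in
theorem odd_choose_iff_mod_two_pow (r s : ℕ) (hr : 1 ≤ r) (hs : 1 ≤ s) :
    Odd (Nat.choose (r - 1) (2 ^ s - 2)) ↔
      (r : ℤ) ≡ 0 [ZMOD (2 ^ s : ℕ)] ∨ (r : ℤ) ≡ -1 [ZMOD (2 ^ s : ℕ)] := by
  set n := r - 1 with hn
  set k := 2 ^ s - 2 with hk
  have h2s : 2 ≤ 2 ^ s := by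
    calc 2 = 2 ^ 1 := rfl
    _ ≤ 2 ^ s := Nat.pow_le_pow_right (by norm_num) hs
  have hklt : k < 2 ^ s := by omega
  set m := n % 2 ^ s with hm
  have hmlt : m < 2 ^ s := Nat.mod_lt _ (by omega)
  -- reduce the AND condition to a condition on m
  have key : (k &&& n = k) ↔ (m = 2 ^ s - 2 ∨ m = 2 ^ s - 1) := by
    have hland : k &&& n = k &&& m := by
      refine Nat.eq_of_testBit_eq fun i => ?_
      simp only [Nat.testBit_land, hm, Nat.testBit_mod_two_pow]
      cases hki : k.testBit i
      · simp
      · have his : i < s := by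
          by_contra hle
          have hlt : k < 2 ^ i :=
            lt_of_lt_of_le hklt (Nat.pow_le_pow_right (by norm_num) (not_lt.mp hle))
          rw [Nat.testBit_lt_two_pow hlt] at hki
          exact Bool.noConfusion hki
        simp [his]
    rw [hland]
    constructor
    · intro h
      have hle : k ≤ m := h ▸ Nat.and_le_right
      omega
    · rintro (h | h)
      · rw [h, ← hk, Nat.and_self]
      · rw [h, Nat.and_two_pow_sub_one_eq_mod, Nat.mod_eq_of_lt hklt]
  rw [odd_choose_land, key]
  -- divisibility characterizations of m
  have hq := Nat.div_add_mod n (2 ^ s)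
  have hd : ∀ c : ℕ, (2 ^ s ∣ n + c ↔ 2 ^ s ∣ m + c) := by
    intro c
    have hrew : n + c = 2 ^ s * (n / 2 ^ s) + (m + c) := by omega
    rw [hrew, Nat.dvd_add_right ⟨n / 2 ^ s, rfl⟩]
  have key1 : 2 ^ s ∣ m + 1 ↔ m = 2 ^ s - 1 := by
    constructor
    · rintro ⟨t, ht⟩
      match t, ht with
      | 0, ht => omega
      | 1, ht => omega
      | (t + 2), ht =>
        have h0 : 0 ≤ 2 ^ s * t := Nat.zero_le _
        have he : 2 ^ s * (t + 2) = 2 ^ s * t + 2 ^ s + 2 ^ s := by ring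
        omega
    · intro h; exact ⟨1, by omega⟩
  have key2 : 2 ^ s ∣ m + 2 ↔ m = 2 ^ s - 2 := by
    constructor
    · rintro ⟨t, ht⟩
      match t, ht with
      | 0, ht => omega
      | 1, ht => omega
      | (t + 2), ht =>
        have h0 : 0 ≤ 2 ^ s * t := Nat.zero_le _
        have he : 2 ^ s * (t + 2) = 2 ^ s * t + 2 ^ s + 2 ^ s := by ring
        omega
    · intro h; exact ⟨1, by omega⟩
  -- translate the ZMOD conditions
  have e0 : ((r : ℤ) ≡ 0 [ZMOD (2 ^ s : ℕ)]) ↔ 2 ^ s ∣ r := by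
    rw [Int.modEq_zero_iff_dvd]
    exact Int.natCast_dvd_natCast
  have e1 : ((r : ℤ) ≡ -1 [ZMOD (2 ^ s : ℕ)]) ↔ 2 ^ s ∣ r + 1 := by
    rw [Int.modEq_iff_dvd]
    have hrw : (-1 : ℤ) - r = -((r + 1 : ℕ) : ℤ) := by push_cast; ring
    rw [hrw, dvd_neg]
    exact Int.natCast_dvd_natCast
  have hrn : r = n + 1 := by omega
  rw [e0, e1, hrn]
  have h1 := (hd 1).trans key1
  have h2 : 2 ^ s ∣ n + 1 + 1 ↔ m = 2 ^ s - 2 := by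
    rw [show n + 1 + 1 = n + 2 from rfl]
    exact (hd 2).trans key2
  rw [h1, h2]
  tauto
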